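/- Every nonexpansive surjection of a compact metric space onto itself is an isometry. -/
import Mathlib


/-- Freudenthal–Hurewicz: a nonexpansive surjection of a compact metric space
onto itself is an isometry. -/
theorem nonexpansive_surjective_isometry
    {X : Type*} [MetricSpace X] [CompactSpace X]
    (T : X → X) (hsurj : Function.Surjective T)
    (hT : ∀ x y : X, dist (T x) (T y) ≤ dist x y) :
    ∀ x y : X, dist (T x) (T y) = dist x y := by
  -- iterated nonexpansiveness
  have hTn : ∀ n (a b : X), dist (T^[n] a) (T^[n] b) ≤ dist a b := by
    intro n
    induction n with
    | zero => intro a b; simp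
    | succ n ih =>
      intro a b
      calc dist (T^[n+1] a) (T^[n+1] b) = dist (T^[n] (T a)) (T^[n] (T b)) := by
            simp [Function.iterate_succ_apply]
        _ ≤ dist (T a) (T b) := ih _ _
        _ ≤ dist a b := hT a b
  -- right inverse
  set S : X → X := Function.surjInv hsurj with hS
  have hTS : ∀ z, T (S z) = z := fun z => Function.surjInv_eq hsurj z
  have hTSn : ∀ n (z : X), T^[n] (S^[n] z) = z := by
    intro n
    induction n with
    | zero => intro z; simp
    | succ n ih =>
      intro z
      rw [Function.iterate_succ_apply' S, Function.iterate_succ_apply T, hTS]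
      exact ih z
  intro x y
  refine le_antisymm (hT x y) ?_
  refine le_of_forall_pos_le_add ?_
  intro ε hε
  -- find m ≥ 1 with S^[m] x close to x and S^[m] y close to y
  obtain ⟨p, -, φ, hφ, hconv⟩ :=
    isCompact_univ.tendsto_subseq
      (x := fun n => ((S^[n] x, S^[n] y) : X × X)) (fun n => Set.mem_univ _)
  have hcauchy := hconv.cauchySeq
  rw [Metric.cauchySeq_iff] at hcauchy
  obtain ⟨N, hN⟩ := hcauchy (ε/2) (by positivity)
  have hkl : φ N < φ (N + 1) := hφ (Nat.lt_succ_self N)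
  set k := φ N
  set l := φ (N + 1)
  have hdist : dist ((S^[l] x, S^[l] y) : X × X) ((S^[k] x, S^[k] y) : X × X) < ε/2 :=
    hN (N + 1) (Nat.le_succ N) N le_rfl
  rw [Prod.dist_eq, max_lt_iff] at hdist
  obtain ⟨hdx, hdy⟩ := hdist
  obtain ⟨m, hm⟩ : ∃ m, l = k + (m + 1) := by
    obtain ⟨c, hc⟩ := Nat.exists_eq_add_of_lt hkl
    exact ⟨c, by omega⟩
  set u := S^[m+1] x
  set v := S^[m+1] y
  have hux : dist u x < ε/2 := by
    calc dist u x = dist (T^[k] (S^[k] u)) (T^[k] (S^[k] x)) := by rw [hTSn, hTSn]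
      _ ≤ dist (S^[k] u) (S^[k] x) := hTn k _ _
      _ = dist (S^[l] x) (S^[k] x) := by
          rw [hm, Function.iterate_add_apply]
      _ < ε/2 := hdx
  have hvy : dist v y < ε/2 := by
    calc dist v y = dist (T^[k] (S^[k] v)) (T^[k] (S^[k] y)) := by rw [hTSn, hTSn]
      _ ≤ dist (S^[k] v) (S^[k] y) := hTn k _ _
      _ = dist (S^[l] y) (S^[k] y) := by
          rw [hm, Function.iterate_add_apply]
      _ < ε/2 := hdy
  have key : dist x y ≤ dist (T u) (T v) := by
    calc dist x y = dist (T^[m+1] u) (T^[m+1] v) := by rw [hTSn, hTSn]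
      _ = dist (T^[m] (T u)) (T^[m] (T v)) := by
          simp [Function.iterate_succ_apply]
      _ ≤ dist (T u) (T v) := hTn m _ _
  calc dist x y ≤ dist (T u) (T v) := key
    _ ≤ dist (T u) (T x) + dist (T x) (T y) + dist (T y) (T v) := dist_triangle4 _ _ _ _
    _ ≤ dist u x + dist (T x) (T y) + dist y v := by
        gcongr
        · exact hT u x
        · exact hT y v
    _ ≤ ε/2 + dist (T x) (T y) + ε/2 := by
        rw [dist_comm y v]; gcongr
    _ = dist (T x) (T y) + ε := by ring
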